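/- For an odd prime p and n ≥ 1, the number of orbits of the Borel subgroup Γ₀(ℤ/pⁿℤ) acting on ℙ¹(ℤ/pⁿℤ) is exactly 2n. -/

import Mathlib

open Matrix

/-- The Borel subgroup `Γ₀(R)` of upper triangular matrices in `SL₂(R)`. -/
def Gamma0 (R : Type*) [CommRing R] : Subgroup (Matrix.SpecialLinearGroup (Fin 2) R) where
  carrier := {A | A.1 1 0 = 0}
  one_mem' := by simp [Matrix.one_apply]
  mul_mem' := by
    intro a b ha hb
    simp only [Set.mem_setOf_eq] at *
    have : ((a * b : Matrix.SpecialLinearGroup (Fin 2) _)).1 1 0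
        = a.1 1 0 * b.1 0 0 + a.1 1 1 * b.1 1 0 := by
      simp [Matrix.mul_apply, Fin.sum_univ_two]
    rw [this, ha, hb]; ring
  inv_mem' := by
    intro a ha
    simp only [Set.mem_setOf_eq] at *
    rw [Matrix.SpecialLinearGroup.SL2_inv_expl]
    simp [ha]

/-- A pair is unimodular (over a local ring) if one of its entries is a unit. -/
def IsUnimodular {R : Type*} [CommRing R] (v : Fin 2 → R) : Prop :=
  IsUnit (v 0) ∨ IsUnit (v 1)

def P1Setoid (R : Type*) [CommRing R] : Setoid {v : Fin 2 → R // IsUnimodular v} where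
  r x y := ∃ u : Rˣ, u • x.1 = y.1
  iseqv := by
    refine ⟨fun x => ⟨1, one_smul _ _⟩, ?_, ?_⟩
    · rintro x y ⟨u, h⟩
      exact ⟨u⁻¹, by rw [← h, inv_smul_smul]⟩
    · rintro x y z ⟨u, h⟩ ⟨w, h2⟩
      exact ⟨w * u, by rw [← h2, ← h]; exact (smul_smul w u x.1).symm ▸ rfl⟩

/-- The projective line over `R`: unimodular pairs up to unit scaling. -/
def P1 (R : Type*) [CommRing R] := Quotient (P1Setoid R)

def P1.mk {R : Type*} [CommRing R] (v : Fin 2 → R) (h : IsUnimodular v) : P1 R :=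
  Quotient.mk (P1Setoid R) ⟨v, h⟩

theorem isUnimodular_mulVec {R : Type*} [CommRing R] [IsLocalRing R]
    (g : Matrix.SpecialLinearGroup (Fin 2) R) {v : Fin 2 → R} (hv : IsUnimodular v) :
    IsUnimodular (g.1.mulVec v) := by
  by_contra h
  rw [IsUnimodular, not_or] at h
  obtain ⟨h0, h1⟩ := h
  have hv' : v = (g⁻¹).1.mulVec (g.1.mulVec v) := by
    rw [Matrix.mulVec_mulVec, ← Matrix.SpecialLinearGroup.coe_mul, inv_mul_cancel]
    simp
  have key : ∀ i, ¬ IsUnit (v i) := by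
    intro i
    rw [hv']
    have hexp : (g⁻¹).1.mulVec (g.1.mulVec v) i
        = (g⁻¹).1 i 0 * (g.1.mulVec v 0) + (g⁻¹).1 i 1 * (g.1.mulVec v 1) := by
      simp only [Matrix.mulVec, dotProduct, Fin.sum_univ_two]
    rw [hexp]
    intro hu
    have m0 : (g⁻¹).1 i 0 * (g.1.mulVec v 0) ∈ nonunits R := by
      intro hc
      exact h0 (isUnit_of_mul_isUnit_right hc)
    have m1 : (g⁻¹).1 i 1 * (g.1.mulVec v 1) ∈ nonunits R := by
      intro hc
      exact h1 (isUnit_of_mul_isUnit_right hc)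
    exact (IsLocalRing.nonunits_add m0 m1) hu
  rcases hv with h | h
  · exact key 0 h
  · exact key 1 h

noncomputable instance P1.smul {R : Type*} [CommRing R] [IsLocalRing R] :
    SMul (Matrix.SpecialLinearGroup (Fin 2) R) (P1 R) where
  smul g := Quotient.map
    (fun v => ⟨g.1.mulVec v.1, isUnimodular_mulVec g v.2⟩)
    (by
      rintro x y ⟨u, h⟩
      refine ⟨u, ?_⟩
      simp only [← h]
      rw [Units.smul_def, Units.smul_def, Matrix.mulVec_smul])

theorem P1.smul_mk {R : Type*} [CommRing R] [IsLocalRing R]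
    (g : Matrix.SpecialLinearGroup (Fin 2) R) (v : Fin 2 → R) (h : IsUnimodular v) :
    g • (P1.mk v h) = P1.mk (g.1.mulVec v) (isUnimodular_mulVec g h) := rfl

noncomputable instance P1.mulAction {R : Type*} [CommRing R] [IsLocalRing R] :
    MulAction (Matrix.SpecialLinearGroup (Fin 2) R) (P1 R) where
  one_smul := by
    intro x
    induction x using Quotient.ind with
    | _ v =>
      show Quotient.map _ _ _ = _
      rw [Quotient.map_mk]
      congr 1
      exact Subtype.ext (by simp)
  mul_smul := by
    intro g h x
    induction x using Quotient.ind with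
    | _ v =>
      show Quotient.map _ _ _ = Quotient.map _ _ (Quotient.map _ _ _)
      rw [Quotient.map_mk, Quotient.map_mk, Quotient.map_mk]
      congr 1
      exact Subtype.ext (by simp [Matrix.mul_apply, Fin.sum_univ_two] <;> (try constructor) <;> ring)

theorem zmod_pow_isUnit_iff (p : ℕ) [hp : Fact p.Prime] (n : ℕ) [NeZero n]
    (x : ZMod (p^n)) : IsUnit x ↔ ¬ (p ∣ x.val) := by
  haveI : NeZero (p^n) := ⟨pow_ne_zero n hp.out.ne_zero⟩
  conv_lhs => rw [← ZMod.natCast_rightInverse x]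
  rw [ZMod.isUnit_iff_coprime]
  rw [Nat.coprime_pow_right_iff (Nat.pos_of_ne_zero (NeZero.ne n))]
  rw [Nat.coprime_comm]
  exact hp.out.coprime_iff_not_dvd

instance zmod_pow_isLocalRing (p : ℕ) [hp : Fact p.Prime] (n : ℕ) [NeZero n] :
    IsLocalRing (ZMod (p^n)) := by
  haveI : NeZero (p^n) := ⟨pow_ne_zero n hp.out.ne_zero⟩
  haveI : Fact (1 < p^n) :=
    ⟨Nat.one_lt_pow (NeZero.ne n) hp.out.one_lt⟩
  refine IsLocalRing.of_nonunits_add ?_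
  intro a b ha hb
  rw [mem_nonunits_iff, zmod_pow_isUnit_iff, not_not] at ha hb ⊢
  rw [ZMod.val_add]
  rw [Nat.dvd_mod_iff (dvd_pow_self p (NeZero.ne n))]
  exact Nat.dvd_add ha hb

theorem isUnimodular_pair_left {R : Type*} [CommRing R] {a b : R} (h : IsUnit a) :
    IsUnimodular ![a, b] := Or.inl (by simpa using h)

theorem isUnimodular_pair_right {R : Type*} [CommRing R] {a b : R} (h : IsUnit b) :
    IsUnimodular ![a, b] := Or.inr (by simpa using h)

-- squares in (ZMod p^m): a unit that is a square mod p is a square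
theorem isSquare_of_isSquare_mod_p (p : ℕ) [hp : Fact p.Prime] (m : ℕ) [NeZero m]
    (hp2 : p ≠ 2) (a : ZMod (p ^ m)) (ha : IsUnit a) (h : IsSquare ((a.val : ℕ) : ZMod p)) :
    IsSquare a := by
  haveI : NeZero (p ^ m) := ⟨pow_ne_zero m hp.out.ne_zero⟩
  set φ := ZMod.unitsMap (dvd_pow_self p (NeZero.ne m)) with hφ
  have hsurj : Function.Surjective φ := ZMod.unitsMap_surjective _
  set A := ha.unit with hA
  -- image of A under φ is a square
  have hcoe : ((φ A : (ZMod p)ˣ) : ZMod p) = ((a.val : ℕ) : ZMod p) := by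
    rw [hφ, ZMod.unitsMap, Units.coe_map]
    simp only [MonoidHom.coe_coe, ZMod.castHom_apply]
    rw [hA, IsUnit.unit_spec, ZMod.natCast_val]
  have hsq : IsSquare (φ A) := by
    obtain ⟨s, hs⟩ := h
    have hu : ((a.val : ℕ) : ZMod p) ≠ 0 := by
      rw [Ne, ZMod.natCast_eq_zero_iff]
      exact (zmod_pow_isUnit_iff p m a).mp ha
    have hs0 : s ≠ 0 := by
      rintro rfl
      rw [mul_zero] at hs
      exact hu hs
    have hsu : IsUnit s := isUnit_iff_ne_zero.mpr hs0
    refine ⟨hsu.unit, Units.ext ?_⟩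
    rw [Units.val_mul, IsUnit.unit_spec, hcoe, hs]
  obtain ⟨t, ht⟩ := hsq
  obtain ⟨B, hB⟩ := hsurj t
  set K := A * (B * B)⁻¹ with hK
  have hker : K ∈ φ.ker := by
    rw [MonoidHom.mem_ker, hK, _root_.map_mul, _root_.map_inv, _root_.map_mul, hB, ← ht,
      mul_inv_cancel]
  -- kernel has odd cardinality
  have hcard : Nat.card φ.ker = p ^ (m - 1) := by
    have h1 : Nat.card (ZMod (p ^ m))ˣ = p ^ (m - 1) * (p - 1) := by
      rw [Nat.card_eq_fintype_card, ZMod.card_units_eq_totient,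
        Nat.totient_prime_pow hp.out (Nat.pos_of_ne_zero (NeZero.ne m))]
    have h2 : Nat.card ((ZMod (p ^ m))ˣ ⧸ φ.ker) = p - 1 := by
      rw [Nat.card_congr (QuotientGroup.quotientKerEquivOfSurjective φ hsurj).toEquiv]
      rw [Nat.card_eq_fintype_card, ZMod.card_units_eq_totient, Nat.totient_prime hp.out]
    have h3 := Subgroup.card_eq_card_quotient_mul_card_subgroup φ.ker
    rw [h1, h2] at h3
    have hp1 : 0 < p - 1 := Nat.sub_pos_of_lt hp.out.one_lt
    nlinarith [h3]
  have hodd : Odd (orderOf K) := by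
    have hdvd : orderOf K ∣ p ^ (m - 1) := by
      have := orderOf_dvd_natCard (⟨K, hker⟩ : φ.ker)
      rw [hcard] at this
      rwa [Subgroup.orderOf_mk] at this
    rcases Nat.even_or_odd (orderOf K) with he | ho
    · exfalso
      have h2 : 2 ∣ p ^ (m-1) := dvd_trans he.two_dvd hdvd
      have h3 := Nat.prime_two.dvd_of_dvd_pow h2
      exact hp2 ((Nat.prime_dvd_prime_iff_eq Nat.prime_two hp.out).mp h3).symm
    · exact ho
  have hKsq : IsSquare K := by
    obtain ⟨j, hj⟩ := hodd
    refine ⟨K ^ (j + 1), ?_⟩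
    rw [← pow_add]
    have h1 : j + 1 + (j + 1) = orderOf K + 1 := by omega
    rw [h1, pow_succ, pow_orderOf_eq_one, one_mul]
  have hAsq : IsSquare A := by
    have : A = K * (B * B) := by rw [hK, inv_mul_cancel_right]
    rw [this]
    exact hKsq.mul ⟨B, rfl⟩
  have := hAsq.map (Units.coeHom (ZMod (p^m)))
  simpa [hA] using this
theorem field_isSquare_ratio (p : ℕ) [Fact p.Prime] (hp2 : p ≠ 2) {a b : ZMod p}
    (ha : a ≠ 0) (hb : b ≠ 0) (h : IsSquare a ↔ IsSquare b) : IsSquare (a * b⁻¹) := by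
  have hab : a * b⁻¹ ≠ 0 := mul_ne_zero ha (inv_ne_zero hb)
  have hq : quadraticChar (ZMod p) a = quadraticChar (ZMod p) b := by
    rcases quadraticChar_dichotomy ha with h1 | h1 <;>
      rcases quadraticChar_dichotomy hb with h2 | h2
    · rw [h1, h2]
    · exfalso
      have hsa : IsSquare a := (quadraticChar_one_iff_isSquare ha).mp h1
      have hsb := (quadraticChar_one_iff_isSquare hb).mpr (h.mp hsa)
      rw [h2] at hsb; norm_num at hsb
    · exfalso
      have hsb : IsSquare b := (quadraticChar_one_iff_isSquare hb).mp h2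
      have hsa := (quadraticChar_one_iff_isSquare ha).mpr (h.mpr hsb)
      rw [h1] at hsa; norm_num at hsa
    · rw [h1, h2]
  have hmul : quadraticChar (ZMod p) (a * b⁻¹) * quadraticChar (ZMod p) b
      = quadraticChar (ZMod p) b := by
    rw [← _root_.map_mul, inv_mul_cancel_right₀ hb, hq]
  have hbne : quadraticChar (ZMod p) b ≠ 0 := by
    rcases quadraticChar_dichotomy hb with h2 | h2 <;> rw [h2] <;> norm_num
  have := mul_right_cancel₀ hbne (by rw [hmul, one_mul] : quadraticChar (ZMod p) (a * b⁻¹) * quadraticChar (ZMod p) b = 1 * quadraticChar (ZMod p) b)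
  exact (quadraticChar_one_iff_isSquare hab).mp this

theorem field_isSquare_sq_mul (p : ℕ) [Fact p.Prime] {c : ZMod p} (hc : c ≠ 0) (u : ZMod p) :
    IsSquare (c * c * u) ↔ IsSquare u := by
  constructor
  · rintro ⟨s, hs⟩
    refine ⟨c⁻¹ * s, ?_⟩
    have : u = c⁻¹ * c⁻¹ * (c * c * u) := by field_simp
    rw [this, hs]; ring
  · rintro ⟨s, hs⟩
    exact ⟨c * s, by rw [hs]; ring⟩

theorem val_decomp (p n : ℕ) [hp : Fact p.Prime] [NeZero n] (k w : ℕ) (hk1 : 1 ≤ k)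
    (hkn : k < n) (hw : ¬ p ∣ w) {r : ZMod (p^n)} (hr : r = ((p^k * w : ℕ) : ZMod (p^n))) :
    r ≠ 0 ∧ ¬ IsUnit r ∧ padicValNat p r.val = k ∧
      ((r.val / p ^ k : ℕ) : ZMod p) = ((w : ℕ) : ZMod p) := by
  haveI : NeZero (p^n) := ⟨pow_ne_zero n hp.out.ne_zero⟩
  have hval : r.val = (p^k * w) % p^n := by rw [hr, ZMod.val_natCast]
  have hdvd : p^k ∣ r.val := by
    rw [hval, Nat.dvd_mod_iff (pow_dvd_pow p hkn.le)]
    exact dvd_mul_right _ _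
  have hnotdvd : ¬ p^(k+1) ∣ r.val := by
    rw [hval, Nat.dvd_mod_iff (pow_dvd_pow p hkn)]
    intro hc
    rw [pow_succ] at hc
    exact hw ((mul_dvd_mul_iff_left (pow_ne_zero k hp.out.ne_zero)).mp hc)
  have hr0 : r ≠ 0 := by
    intro hc
    have hv0 : r.val = 0 := by rw [hc, ZMod.val_zero]
    rw [hval] at hv0
    have h1 : p^n ∣ p^k * w := Nat.dvd_of_mod_eq_zero hv0
    have h2 : p^k * p^(n-k) ∣ p^k * w := by
      rwa [← pow_add, Nat.add_sub_cancel' hkn.le]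
    have h3 : p^(n-k) ∣ w := (mul_dvd_mul_iff_left (pow_ne_zero k hp.out.ne_zero)).mp h2
    exact hw (dvd_trans (dvd_pow_self p (by omega : n - k ≠ 0)) h3)
  have hv0 : r.val ≠ 0 := fun hc => hr0 (ZMod.val_eq_zero r |>.mp hc)
  have hfact : r.val.factorization p = k := by
    have h1 : k ≤ r.val.factorization p :=
      (Nat.Prime.pow_dvd_iff_le_factorization hp.out hv0).mp hdvd
    have h2 : ¬ (k + 1 ≤ r.val.factorization p) := fun hc =>
      hnotdvd ((Nat.Prime.pow_dvd_iff_le_factorization hp.out hv0).mpr hc)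
    omega
  have hpadic : padicValNat p r.val = k := by
    rw [← Nat.factorization_def _ hp.out, hfact]
  refine ⟨hr0, ?_, hpadic, ?_⟩
  · rw [zmod_pow_isUnit_iff, not_not]
    exact dvd_trans (dvd_pow_self p (by omega : k ≠ 0)) hdvd
  · have hmul : p ^ k * (r.val / p ^ k) = r.val := Nat.mul_div_cancel' hdvd
    have hmodeq : p^k * (r.val / p^k) ≡ p^k * w [MOD p^k * p^(n-k)] := by
      rw [hmul, ← pow_add, Nat.add_sub_cancel' hkn.le]
      rw [hval]
      exact Nat.mod_modEq _ _
    have hcan := Nat.ModEq.mul_left_cancel' (pow_ne_zero k hp.out.ne_zero) hmodeq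
    have hp1 : (r.val / p^k) ≡ w [MOD p] :=
      hcan.of_dvd (dvd_pow_self p (by omega : n - k ≠ 0))
    exact (ZMod.natCast_eq_natCast_iff _ _ _).mpr hp1

open Classical in
noncomputable def inv1 (p n : ℕ) (r : ZMod (p^n)) : ℕ :=
  if r = 0 then 1
  else 2 * padicValNat p r.val +
    (if IsSquare (((r.val / p ^ padicValNat p r.val : ℕ)) : ZMod p) then 0 else 1)

theorem inv1_eq (p n : ℕ) [hp : Fact p.Prime] [NeZero n] (k w : ℕ) (hk1 : 1 ≤ k)
    (hkn : k < n) (hw : ¬ p ∣ w) {r : ZMod (p^n)} (hr : r = ((p^k * w : ℕ) : ZMod (p^n))) :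
    inv1 p n r = 2 * k + (if IsSquare ((w : ZMod p)) then 0 else 1) := by
  obtain ⟨h0, hnu, hpad, hcast⟩ := val_decomp p n k w hk1 hkn hw hr
  rw [inv1, if_neg h0, hpad, hcast]
  congr

-- decomposition of a nonzero nonunit
theorem exists_decomp (p n : ℕ) [hp : Fact p.Prime] [NeZero n] {r : ZMod (p^n)}
    (h0 : r ≠ 0) (hnu : ¬ IsUnit r) :
    1 ≤ padicValNat p r.val ∧ padicValNat p r.val < n ∧
      ¬ p ∣ (r.val / p ^ padicValNat p r.val) ∧
      r = ((p ^ padicValNat p r.val * (r.val / p ^ padicValNat p r.val) : ℕ) : ZMod (p^n)) := by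
  haveI : NeZero (p^n) := ⟨pow_ne_zero n hp.out.ne_zero⟩
  have hv0 : r.val ≠ 0 := fun hc => h0 (ZMod.val_eq_zero r |>.mp hc)
  have hpdvd : p ∣ r.val := by
    rw [zmod_pow_isUnit_iff, not_not] at hnu; exact hnu
  have hfact : r.val.factorization p = padicValNat p r.val :=
    Nat.factorization_def _ hp.out
  have hdvd : p ^ padicValNat p r.val ∣ r.val := by
    rw [← hfact]; exact Nat.ordProj_dvd _ _
  have hk1 : 1 ≤ padicValNat p r.val := by
    have := (Nat.Prime.pow_dvd_iff_le_factorization hp.out hv0).mp (by rwa [pow_one])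
    omega
  have hkn : padicValNat p r.val < n := by
    have h1 : p ^ padicValNat p r.val ≤ r.val := Nat.le_of_dvd (Nat.pos_of_ne_zero hv0) hdvd
    have h2 : r.val < p ^ n := ZMod.val_lt r
    by_contra hc
    push_neg at hc
    exact absurd (lt_of_le_of_lt (le_trans (Nat.pow_le_pow_right hp.out.pos hc) h1) h2)
      (lt_irrefl _)
  have hcop : ¬ p ∣ (r.val / p ^ padicValNat p r.val) := by
    rw [← hfact]
    exact Nat.not_dvd_ordCompl hp.out hv0
  refine ⟨hk1, hkn, hcop, ?_⟩
  conv_lhs => rw [← ZMod.natCast_rightInverse r]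
  congr 1
  exact (Nat.mul_div_cancel' hdvd).symm

open Classical in
noncomputable def cfun (p n : ℕ) (v : Fin 2 → ZMod (p^n)) : ℕ :=
  if IsUnit (v 1) then 0 else inv1 p n (v 1 * (v 0)⁻¹)
theorem exists_sq_scale (p n : ℕ) [hp : Fact p.Prime] [NeZero n] (hp2 : p ≠ 2)
    (k u w : ℕ) (hkn : k < n) (hu : ¬ p ∣ u) (hw : ¬ p ∣ w)
    (hsq : IsSquare ((u : ZMod p)) ↔ IsSquare ((w : ZMod p))) :
    ∃ D : (ZMod (p^n))ˣ, (D : ZMod (p^n))^2 * ((p^k * w : ℕ) : ZMod (p^n))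
      = ((p^k * u : ℕ) : ZMod (p^n)) := by
  haveI : NeZero (p^n) := ⟨pow_ne_zero n hp.out.ne_zero⟩
  haveI hm0 : NeZero (n - k) := ⟨by omega⟩
  set m := n - k with hm
  haveI : NeZero (p^m) := ⟨pow_ne_zero m hp.out.ne_zero⟩
  have hunit : ∀ t : ℕ, ¬ p ∣ t → IsUnit ((t : ZMod (p^m))) := by
    intro t ht
    rw [zmod_pow_isUnit_iff, ZMod.val_natCast,
      Nat.dvd_mod_iff (dvd_pow_self p (NeZero.ne m))]
    exact ht
  have huu := hunit u hu
  have hwu := hunit w hw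
  have hwinv : IsUnit ((w : ZMod (p^m))⁻¹) :=
    IsUnit.of_mul_eq_one _ (ZMod.inv_mul_of_unit _ hwu)
  set a : ZMod (p^m) := (u : ZMod (p^m)) * (w : ZMod (p^m))⁻¹ with ha
  have haunit : IsUnit a := huu.mul hwinv
  set ψ : ZMod (p^m) →+* ZMod p := ZMod.castHom (dvd_pow_self p (NeZero.ne m)) (ZMod p) with hψ
  have hψw : ψ ((w : ZMod (p^m))⁻¹) = ((w : ZMod p))⁻¹ := by
    symm
    apply inv_eq_of_mul_eq_one_right
    have : ψ ((w : ZMod (p^m)) * (w : ZMod (p^m))⁻¹) = 1 := by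
      rw [ZMod.mul_inv_of_unit _ hwu, _root_.map_one]
    rwa [_root_.map_mul, _root_.map_natCast] at this
  have hψa : ψ a = (u : ZMod p) * ((w : ZMod p))⁻¹ := by
    rw [ha, _root_.map_mul, _root_.map_natCast, hψw]
  have hu0 : (u : ZMod p) ≠ 0 := by
    rw [Ne, ZMod.natCast_eq_zero_iff]; exact hu
  have hw0 : (w : ZMod p) ≠ 0 := by
    rw [Ne, ZMod.natCast_eq_zero_iff]; exact hw
  have hsqa : IsSquare a := by
    apply isSquare_of_isSquare_mod_p p m hp2 a haunit
    have hval : ((a.val : ℕ) : ZMod p) = ψ a := by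
      rw [hψ, ZMod.castHom_apply, ZMod.natCast_val]
    rw [hval, hψa]
    exact field_isSquare_ratio p hp2 hu0 hw0 hsq
  obtain ⟨e, he⟩ := hsqa
  have heu : IsUnit e := by
    rw [he] at haunit
    exact isUnit_of_mul_isUnit_left haunit
  have hev : ¬ p ∣ e.val := (zmod_pow_isUnit_iff p m e).mp heu
  have hDu : IsUnit ((e.val : ℕ) : ZMod (p^n)) := by
    rw [zmod_pow_isUnit_iff, ZMod.val_natCast,
      Nat.dvd_mod_iff (dvd_pow_self p (NeZero.ne n))]
    exact hev
  refine ⟨hDu.unit, ?_⟩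
  rw [IsUnit.unit_spec]
  -- the congruence mod p^m
  have hcong : (e.val * e.val * w : ℕ) ≡ u [MOD p^m] := by
    rw [← ZMod.natCast_eq_natCast_iff]
    push_cast
    rw [ZMod.natCast_val, ZMod.cast_id, ← he, ha, mul_assoc,
      ZMod.inv_mul_of_unit _ hwu, mul_one]
  have hcong2 : p^k * (e.val * e.val * w) ≡ p^k * u [MOD p^n] := by
    have := Nat.ModEq.mul_left' (c := p^k) hcong
    rwa [← pow_add, Nat.add_sub_cancel' hkn.le] at this
  have hfin : ((p^k * (e.val * e.val * w) : ℕ) : ZMod (p^n)) = ((p^k * u : ℕ) : ZMod (p^n)) :=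
    (ZMod.natCast_eq_natCast_iff _ _ _).mpr hcong2
  rw [← hfin]
  push_cast
  ring
theorem cfun_unit_smul (p n : ℕ) [hp : Fact p.Prime] [NeZero n]
    (u : (ZMod (p^n))ˣ) (v : Fin 2 → ZMod (p^n)) (hv : IsUnimodular v) :
    cfun p n (u • v) = cfun p n v := by
  haveI : NeZero (p^n) := ⟨pow_ne_zero n hp.out.ne_zero⟩
  have h0 : (u • v) 0 = (u : ZMod (p^n)) * v 0 := rfl
  have h1 : (u • v) 1 = (u : ZMod (p^n)) * v 1 := rfl
  have huu : IsUnit ((u : ZMod (p^n))) := u.isUnit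
  by_cases hv1 : IsUnit (v 1)
  · rw [cfun, cfun, if_pos hv1, if_pos (by rw [h1]; exact huu.mul hv1)]
  · have hv0 : IsUnit (v 0) := hv.resolve_right hv1
    have huv1 : ¬ IsUnit ((u • v) 1) := by
      rw [h1]; intro hc; exact hv1 (isUnit_of_mul_isUnit_right hc)
    have huv0 : IsUnit ((u : ZMod (p^n)) * v 0) := huu.mul hv0
    rw [cfun, cfun, if_neg huv1, if_neg hv1, h0, h1]
    congr 1
    have e1 : ((u : ZMod (p^n)) * v 1) * ((u : ZMod (p^n)) * v 0)⁻¹ * ((u : ZMod (p^n)) * v 0)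
        = (u : ZMod (p^n)) * v 1 := by
      rw [mul_assoc, ZMod.inv_mul_of_unit _ huv0, mul_one]
    have e2 : (v 1 * (v 0)⁻¹) * ((u : ZMod (p^n)) * v 0) = (u : ZMod (p^n)) * v 1 := by
      rw [show (v 1 * (v 0)⁻¹) * ((u : ZMod (p^n)) * v 0)
        = ((v 0)⁻¹ * v 0) * ((u : ZMod (p^n)) * v 1) from by ring,
        ZMod.inv_mul_of_unit _ hv0, one_mul]
    exact huv0.mul_right_cancel (by rw [e1, e2])

theorem cfun_borel (p n : ℕ) [hp : Fact p.Prime] [NeZero n]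
    (a b d : ZMod (p^n)) (had : a * d = 1) (v : Fin 2 → ZMod (p^n)) (hv : IsUnimodular v) :
    cfun p n ![a * v 0 + b * v 1, d * v 1] = cfun p n v := by
  haveI : NeZero (p^n) := ⟨pow_ne_zero n hp.out.ne_zero⟩
  set castp : ZMod (p^n) →+* ZMod p :=
    ZMod.castHom (dvd_pow_self p (NeZero.ne n)) (ZMod p) with hcastp
  have hda : d * a = 1 := by rw [mul_comm]; exact had
  have hd : IsUnit d := IsUnit.of_mul_eq_one a hda
  have ha : IsUnit a := IsUnit.of_mul_eq_one d had
  by_cases h1 : IsUnit (v 1)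
  · rw [cfun, cfun, if_pos h1, if_pos]
    simp only [Matrix.cons_val_one, Matrix.head_cons]
    exact hd.mul h1
  · have hdv1 : ¬ IsUnit (d * v 1) := fun hc => h1 (isUnit_of_mul_isUnit_right hc)
    have hv0 : IsUnit (v 0) := hv.resolve_right h1
    have hbv1 : ¬ IsUnit (b * v 1) := fun hc => h1 (isUnit_of_mul_isUnit_right hc)
    have hv0' : IsUnit (a * v 0 + b * v 1) := by
      by_contra hc
      have h2 : ¬ IsUnit (-(b * v 1)) := by rwa [IsUnit.neg_iff]
      have h3 : a * v 0 = (a * v 0 + b * v 1) + (-(b * v 1)) := by ring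
      have h4 := IsLocalRing.nonunits_add (a := a * v 0 + b * v 1) (b := -(b * v 1))
        (mem_nonunits_iff.mpr hc) (mem_nonunits_iff.mpr h2)
      rw [mem_nonunits_iff, ← h3] at h4
      exact h4 (ha.mul hv0)
    rw [cfun, cfun, if_neg h1, if_neg]
    swap
    · simp only [Matrix.cons_val_one, Matrix.head_cons]; exact hdv1
    simp only [Matrix.cons_val_one, Matrix.head_cons, Matrix.cons_val_zero]
    set r := v 1 * (v 0)⁻¹ with hr
    have hv1eq : r * v 0 = v 1 := by
      rw [hr, mul_assoc, ZMod.inv_mul_of_unit _ hv0, mul_one]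
    by_cases h0 : v 1 = 0
    · rw [h0, mul_zero, zero_mul, hr, h0, zero_mul]
    · have hr0 : r ≠ 0 := fun hc => h0 (by rw [← hv1eq, hc, zero_mul])
      have hrnu : ¬ IsUnit r := fun hc => h1 (hv1eq ▸ hc.mul hv0)
      have hinvu : IsUnit ((a * v 0 + b * v 1)⁻¹) :=
        IsUnit.of_mul_eq_one _ (ZMod.inv_mul_of_unit _ hv0')
      set m := d * v 0 * (a * v 0 + b * v 1)⁻¹ with hmdef
      have hm : IsUnit m := (hd.mul hv0).mul hinvu
      have hr' : (d * v 1) * (a * v 0 + b * v 1)⁻¹ = m * r := by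
        have e : m * r = (d * v 1) * (a * v 0 + b * v 1)⁻¹ * ((v 0) * (v 0)⁻¹) := by
          rw [hmdef, hr]; ring
        rw [e, ZMod.mul_inv_of_unit _ hv0, mul_one]
      -- mod p computation
      have hψinv : castp ((a * v 0 + b * v 1)⁻¹) = (castp (a * v 0 + b * v 1))⁻¹ := by
        symm
        apply inv_eq_of_mul_eq_one_right
        rw [← _root_.map_mul, ZMod.mul_inv_of_unit _ hv0', _root_.map_one]
      have hcv1 : castp (v 1) = 0 := by
        have hdvd : p ∣ (v 1).val := by
          rw [zmod_pow_isUnit_iff, not_not] at h1; exact h1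
        rw [hcastp, ZMod.castHom_apply, ← ZMod.natCast_val,
          ZMod.natCast_eq_zero_iff]
        exact hdvd
      have hv0ne : castp (v 0) ≠ 0 := by
        have : castp (v 0) * castp ((v 0)⁻¹) = 1 := by
          rw [← _root_.map_mul, ZMod.mul_inv_of_unit _ hv0, _root_.map_one]
        exact left_ne_zero_of_mul_eq_one this
      have hainv : (castp a)⁻¹ = castp d := by
        apply inv_eq_of_mul_eq_one_right
        rw [← _root_.map_mul, had, _root_.map_one]
      have hcm : castp m = castp d * castp d := by
        rw [hmdef, _root_.map_mul, _root_.map_mul, hψinv, _root_.map_add, _root_.map_mul, _root_.map_mul, hcv1, mul_zero,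
          add_zero, _root_.mul_inv_rev, hainv]
        field_simp
      -- decompose r
      obtain ⟨hk1, hkn, hcu, hrep⟩ := exists_decomp p n hr0 hrnu
      set k := padicValNat p r.val with hk
      set u := r.val / p^k with hu
      have hmr_rep : m * r = ((p^k * (m.val * u) : ℕ) : ZMod (p^n)) := by
        conv_lhs => rw [← ZMod.natCast_rightInverse m, hrep]
        push_cast
        ring
      have hmnd : ¬ p ∣ m.val := (zmod_pow_isUnit_iff p n m).mp hm
      have hmu : ¬ p ∣ (m.val * u) := by
        intro hc
        rcases hp.out.dvd_mul.mp hc with hc | hc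
        · exact hmnd hc
        · exact hcu hc
      rw [hr', inv1_eq p n k (m.val * u) hk1 hkn hmu hmr_rep,
        inv1_eq p n k u hk1 hkn hcu hrep]
      congr 1
      have hd0 : castp d ≠ 0 :=
        left_ne_zero_of_mul_eq_one (by rw [← _root_.map_mul, hda, _root_.map_one] :
          castp d * castp a = 1)
      have hcast : ((m.val * u : ℕ) : ZMod p) = castp d * castp d * ((u : ℕ) : ZMod p) := by
        push_cast
        rw [show ((m.val : ℕ) : ZMod p) = castp m from by
          rw [hcastp, ZMod.castHom_apply, ZMod.natCast_val], hcm]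
      have hiff : IsSquare ((m.val * u : ℕ) : ZMod p) ↔ IsSquare ((u : ℕ) : ZMod p) := by
        rw [hcast]
        exact field_isSquare_sq_mul p hd0 _
      exact if_congr hiff rfl rfl
theorem vec_eta {α : Type*} (v : Fin 2 → α) : ![v 0, v 1] = v := by
  funext i; fin_cases i <;> simp

theorem P1.mk_eq_of_eq {R : Type*} [CommRing R] {v w : Fin 2 → R}
    (hv : IsUnimodular v) (hw : IsUnimodular w) (he : v = w) : P1.mk v hv = P1.mk w hw := by
  subst he; rfl

theorem mulVec_eq_two {R : Type*} [CommRing R] (M : Matrix (Fin 2) (Fin 2) R)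
    (v : Fin 2 → R) :
    M.mulVec v = ![M 0 0 * v 0 + M 0 1 * v 1, M 1 0 * v 0 + M 1 1 * v 1] := by
  funext i
  fin_cases i <;> simp [Matrix.mulVec, dotProduct, Fin.sum_univ_two]

def borelElt {R : Type*} [CommRing R] (a b d : R) (h : a * d = 1) : Gamma0 R :=
  ⟨⟨!![a, b; 0, d], by rw [Matrix.det_fin_two_of]; simp [h]⟩, by
    show (!![a, b; 0, d]) 1 0 = 0
    simp⟩

theorem borelElt_smul (p n : ℕ) [hp : Fact p.Prime] [NeZero n]
    (a b d : ZMod (p^n)) (h : a * d = 1) (v : Fin 2 → ZMod (p^n)) (hv : IsUnimodular v)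
    (hw : IsUnimodular ![a * v 0 + b * v 1, d * v 1]) :
    (borelElt a b d h) • (P1.mk v hv) = P1.mk ![a * v 0 + b * v 1, d * v 1] hw := by
  have h1 : (borelElt a b d h) • (P1.mk v hv)
      = ((borelElt a b d h : Matrix.SpecialLinearGroup (Fin 2) (ZMod (p^n)))) • P1.mk v hv := rfl
  rw [h1, P1.smul_mk]
  apply P1.mk_eq_of_eq
  rw [mulVec_eq_two]
  have he : (borelElt a b d h : Matrix.SpecialLinearGroup (Fin 2) (ZMod (p^n))).1
      = !![a, b; 0, d] := rfl
  rw [he]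
  simp

noncomputable def cP1 (p n : ℕ) [hp : Fact p.Prime] [NeZero n] :
    P1 (ZMod (p^n)) → ℕ :=
  Quotient.lift (fun v => cfun p n v.1) (by
    rintro ⟨v, hv⟩ ⟨w, hw⟩ ⟨uu, h⟩
    simp only
    conv_rhs => rw [show w = uu • v from h.symm]
    exact (cfun_unit_smul p n uu v hv).symm)

theorem cP1_mk (p n : ℕ) [hp : Fact p.Prime] [NeZero n] (v : Fin 2 → ZMod (p^n))
    (hv : IsUnimodular v) : cP1 p n (P1.mk v hv) = cfun p n v := rfl

theorem cP1_smul (p n : ℕ) [hp : Fact p.Prime] [NeZero n]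
    (σ : Gamma0 (ZMod (p^n))) (x : P1 (ZMod (p^n))) :
    cP1 p n (σ • x) = cP1 p n x := by
  induction x using Quotient.ind with
  | _ v =>
  show cP1 p n (σ • P1.mk v.1 v.2) = cP1 p n (P1.mk v.1 v.2)
  have hsm : σ • P1.mk v.1 v.2
      = (σ : Matrix.SpecialLinearGroup (Fin 2) (ZMod (p^n))) • P1.mk v.1 v.2 := rfl
  rw [hsm, P1.smul_mk, cP1_mk, cP1_mk]
  set M := (σ : Matrix.SpecialLinearGroup (Fin 2) (ZMod (p^n))).1 with hM
  have h10 : M 1 0 = 0 := σ.2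
  have hdet : M 0 0 * M 1 1 = 1 := by
      have := (σ : Matrix.SpecialLinearGroup (Fin 2) (ZMod (p^n))).2
      rw [Matrix.det_fin_two] at this
      rw [← hM] at this
      rw [h10, mul_zero, sub_zero] at this
      exact this
  rw [mulVec_eq_two, h10, zero_mul, zero_add]
  exact cfun_borel p n (M 0 0) (M 0 1) (M 1 1) hdet v.1 v.2
noncomputable def repP (p n : ℕ) [hp : Fact p.Prime] [NeZero n] (g : ℕ) (j : ℕ) :
    P1 (ZMod (p^n)) :=
  if j = 0 then P1.mk ![0, 1] (isUnimodular_pair_right isUnit_one)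
  else if j = 1 then P1.mk ![1, 0] (isUnimodular_pair_left isUnit_one)
  else P1.mk ![1, ((p ^ (j / 2) * (if Even j then 1 else g) : ℕ) : ZMod (p^n))]
    (isUnimodular_pair_left isUnit_one)

theorem cP1_repP (p n : ℕ) [hp : Fact p.Prime] [NeZero n] (g : ℕ) (hgp : ¬ p ∣ g)
    (hg : ¬ IsSquare ((g : ℕ) : ZMod p)) (j : ℕ) (hj : j < 2 * n) :
    cP1 p n (repP p n g j) = j := by
  haveI : NeZero (p^n) := ⟨pow_ne_zero n hp.out.ne_zero⟩
  haveI : Fact (1 < p^n) := ⟨Nat.one_lt_pow (NeZero.ne n) hp.out.one_lt⟩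
  by_cases hj0 : j = 0
  · subst hj0
    rw [repP, if_pos rfl, cP1_mk, cfun,
      if_pos (by simp : IsUnit (![(0 : ZMod (p^n)), 1] 1))]
  by_cases hj1 : j = 1
  · subst hj1
    rw [repP, if_neg hj0, if_pos rfl, cP1_mk, cfun,
      if_neg (by simp [not_isUnit_zero] : ¬ IsUnit (![(1 : ZMod (p^n)), 0] 1))]
    simp only [Matrix.cons_val_one, Matrix.head_cons, Matrix.cons_val_zero]
    rw [zero_mul, inv1, if_pos rfl]
  · set k := j / 2 with hk
    set w : ℕ := if Even j then 1 else g with hw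
    have hk1 : 1 ≤ k := by omega
    have hkn : k < n := by omega
    have hp1 := hp.out.one_lt
    have hwnd : ¬ p ∣ w := by
      rw [hw]
      split
      · intro hc
        have := Nat.dvd_one.mp hc
        omega
      · exact hgp
    obtain ⟨h0, hnu, _, _⟩ := val_decomp p n k w hk1 hkn hwnd rfl
    rw [repP, if_neg hj0, if_neg hj1, cP1_mk, cfun,
      if_neg (by simp only [Matrix.cons_val_one, Matrix.head_cons]; exact hnu)]
    simp only [Matrix.cons_val_one, Matrix.head_cons, Matrix.cons_val_zero]
    rw [ZMod.inv_one, mul_one, inv1_eq p n k w hk1 hkn hwnd rfl]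
    rcases Nat.even_or_odd j with hev | hodd
    · have hw1 : w = 1 := by rw [hw, if_pos hev]
      rw [hw1, if_pos (by rw [Nat.cast_one]; exact IsSquare.one)]
      obtain ⟨t, ht⟩ := hev
      omega
    · have hwg : w = g := by
        rw [hw, if_neg (by simpa [Nat.not_even_iff_odd] using hodd)]
      rw [hwg, if_neg hg]
      obtain ⟨t, ht⟩ := hodd
      omega

theorem orbit_rep (p n : ℕ) [hp : Fact p.Prime] [NeZero n] (hp2 : p ≠ 2) (g : ℕ)
    (hgp : ¬ p ∣ g) (hg : ¬ IsSquare ((g : ℕ) : ZMod p)) (x : P1 (ZMod (p^n))) :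
    cP1 p n x < 2 * n ∧
      ∃ σ : Gamma0 (ZMod (p^n)), σ • repP p n g (cP1 p n x) = x := by
  haveI : NeZero (p^n) := ⟨pow_ne_zero n hp.out.ne_zero⟩
  haveI : Fact (1 < p^n) := ⟨Nat.one_lt_pow (NeZero.ne n) hp.out.one_lt⟩
  have hn1 : 1 ≤ n := Nat.pos_of_ne_zero (NeZero.ne n)
  induction x using Quotient.ind with
  | _ vv =>
  show cP1 p n (P1.mk vv.1 vv.2) < 2 * n ∧
    ∃ σ : Gamma0 (ZMod (p^n)), σ • repP p n g (cP1 p n (P1.mk vv.1 vv.2)) = P1.mk vv.1 vv.2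
  obtain ⟨v, hv⟩ := vv
  by_cases h1 : IsUnit (v 1)
  · have hc : cP1 p n (P1.mk v hv) = 0 := by rw [cP1_mk, cfun, if_pos h1]
    rw [hc]
    refine ⟨by omega, ?_⟩
    rw [repP, if_pos rfl]
    refine ⟨borelElt ((v 1)⁻¹) (v 0) (v 1) (ZMod.inv_mul_of_unit _ h1), ?_⟩
    rw [borelElt_smul p n _ _ _ _ ![0, 1] _
      (isUnimodular_pair_right (by simpa using h1))]
    exact P1.mk_eq_of_eq _ _ (by funext i; fin_cases i <;> simp)
  · have hv0 : IsUnit (v 0) := hv.resolve_right h1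
    by_cases h0 : v 1 = 0
    · have hc : cP1 p n (P1.mk v hv) = 1 := by
        rw [cP1_mk, cfun, if_neg h1, h0, zero_mul, inv1, if_pos rfl]
      rw [hc]
      refine ⟨by omega, ?_⟩
      rw [repP, if_neg one_ne_zero, if_pos rfl]
      refine ⟨borelElt (v 0) 0 ((v 0)⁻¹) (ZMod.mul_inv_of_unit _ hv0), ?_⟩
      rw [borelElt_smul p n _ _ _ _ ![1, 0] _
        (isUnimodular_pair_left (by simpa using hv0))]
      exact P1.mk_eq_of_eq _ _ (by funext i; fin_cases i <;> simp [h0])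
    · set r := v 1 * (v 0)⁻¹ with hrdef
      have hv1eq : r * v 0 = v 1 := by
        rw [hrdef, mul_assoc, ZMod.inv_mul_of_unit _ hv0, mul_one]
      have hr0 : r ≠ 0 := fun hc => h0 (by rw [← hv1eq, hc, zero_mul])
      have hrnu : ¬ IsUnit r := fun hc => h1 (hv1eq ▸ hc.mul hv0)
      obtain ⟨hk1, hkn, hcu, hrep⟩ := exists_decomp p n hr0 hrnu
      set k := padicValNat p r.val with hkdef
      set u := r.val / p ^ k with hudef
      have hc : cP1 p n (P1.mk v hv)
          = 2 * k + (if IsSquare ((u : ℕ) : ZMod p) then 0 else 1) := by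
        rw [cP1_mk, cfun, if_neg h1, ← hrdef, inv1_eq p n k u hk1 hkn hcu hrep]
      rw [hc]
      have hε : (if IsSquare ((u : ℕ) : ZMod p) then 0 else 1) = 0 ∨
          (if IsSquare ((u : ℕ) : ZMod p) then 0 else 1) = 1 := by
        split <;> simp
      refine ⟨by omega, ?_⟩
      set c := 2 * k + (if IsSquare ((u : ℕ) : ZMod p) then 0 else 1) with hcdef
      have hcne0 : c ≠ 0 := by omega
      have hcne1 : c ≠ 1 := by omega
      have hdiv : c / 2 = k := by omega
      have hevc : Even c ↔ IsSquare ((u : ℕ) : ZMod p) := by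
        rw [Nat.even_iff]
        constructor
        · intro hmod
          by_contra hs
          rw [hcdef, if_neg hs] at hmod
          omega
        · intro hs
          rw [hcdef, if_pos hs]
          omega
      set w : ℕ := if Even c then 1 else g with hw
      have hp1 := hp.out.one_lt
      have hwnd : ¬ p ∣ w := by
        rw [hw]; split
        · intro hc2
          have := Nat.dvd_one.mp hc2
          omega
        · exact hgp
      have hsqiff : IsSquare ((u : ℕ) : ZMod p) ↔ IsSquare ((w : ℕ) : ZMod p) := by
        by_cases hs : IsSquare ((u : ℕ) : ZMod p)
        · have : w = 1 := by rw [hw, if_pos (hevc.mpr hs)]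
          rw [this]
          exact iff_of_true hs (by simpa using (isSquare_one : IsSquare (1 : ZMod p)))
        · have : w = g := by
            rw [hw, if_neg (fun hcc => hs (hevc.mp hcc))]
          rw [this]
          exact iff_of_false hs hg
      obtain ⟨D, hD⟩ := exists_sq_scale p n hp2 k u w hkn hcu hwnd hsqiff
      refine ⟨borelElt ((D⁻¹ : (ZMod (p^n))ˣ) : ZMod (p^n)) 0 (D : ZMod (p^n))
        (by rw [Units.inv_mul]), ?_⟩
      rw [repP, if_neg hcne0, if_neg hcne1]
      set t : ZMod (p^n) := ((p ^ k * w : ℕ) : ZMod (p^n)) with ht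
      have hvec : P1.mk ![1, ((p ^ (c / 2) * (if Even c then 1 else g) : ℕ) : ZMod (p^n))]
          (isUnimodular_pair_left isUnit_one)
          = P1.mk ![(1 : ZMod (p^n)), t] (isUnimodular_pair_left isUnit_one) :=
        P1.mk_eq_of_eq _ _ (by rw [hdiv, ← hw, ht])
      rw [hvec, borelElt_smul p n _ _ _ _ ![1, t] _
        (isUnimodular_pair_left (by simpa using (D⁻¹).isUnit))]
      apply Quotient.sound
      refine ⟨hv0.unit * D, ?_⟩
      funext i
      fin_cases i
      · show ((hv0.unit * D : (ZMod (p^n))ˣ) : ZMod (p^n))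
          * ((D⁻¹ : (ZMod (p^n))ˣ) * ![(1 : ZMod (p^n)), t] 0 + 0 * ![(1 : ZMod (p^n)), t] 1) = v 0
        simp only [Matrix.cons_val_zero, Matrix.cons_val_one, Matrix.head_cons,
          Units.val_mul, mul_one, zero_mul, add_zero, IsUnit.unit_spec]
        rw [mul_assoc, Units.mul_inv, mul_one]
      · show ((hv0.unit * D : (ZMod (p^n))ˣ) : ZMod (p^n))
          * ((D : ZMod (p^n)) * ![(1 : ZMod (p^n)), t] 1) = v 1
        simp only [Matrix.cons_val_one, Matrix.head_cons, Units.val_mul, IsUnit.unit_spec, Matrix.cons_val_zero]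
        have : (v 0) * (D : ZMod (p^n)) * ((D : ZMod (p^n)) * t)
            = (v 0) * ((D : ZMod (p^n))^2 * t) := by ring
        rw [this, ht, hD, ← hrep, mul_comm, hv1eq]
/-- For an odd prime `p` and `n ≥ 1`, the Borel subgroup `Γ₀(ℤ/pⁿℤ)` has exactly `2n`
orbits on `ℙ¹(ℤ/pⁿℤ)`. -/
theorem card_borel_orbits_P1 (p : ℕ) [Fact p.Prime] (hp2 : p ≠ 2) (n : ℕ) [NeZero n] :
    Nat.card (MulAction.orbitRel.Quotient (Gamma0 (ZMod (p ^ n))) (P1 (ZMod (p ^ n))))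
      = 2 * n := by
  haveI : NeZero (p^n) := ⟨pow_ne_zero n (Fact.out : p.Prime).ne_zero⟩
  have hchar : ringChar (ZMod p) ≠ 2 := by rw [ZMod.ringChar_zmod_n]; exact hp2
  obtain ⟨g', hg'⟩ := FiniteField.exists_nonsquare (F := ZMod p) hchar
  set g := g'.val with hgdef
  have hgcast : ((g : ℕ) : ZMod p) = g' := ZMod.natCast_rightInverse g'
  have hg : ¬ IsSquare ((g : ℕ) : ZMod p) := by rw [hgcast]; exact hg'
  have hgp : ¬ p ∣ g := by
    intro hc
    have h2 : ((g : ℕ) : ZMod p) = 0 := (ZMod.natCast_eq_zero_iff _ _).mpr hc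
    rw [hgcast] at h2
    exact hg' (h2 ▸ ⟨0, (mul_zero 0).symm⟩)
  apply Nat.card_eq_of_equiv_fin
  refine Equiv.mk
    (Quotient.lift
      (fun x => (⟨cP1 p n x, (orbit_rep p n hp2 g hgp hg x).1⟩ : Fin (2 * n))) ?_)
    (fun j => Quotient.mk (MulAction.orbitRel (Gamma0 (ZMod (p^n))) (P1 (ZMod (p^n))))
      (repP p n g j.1)) ?_ ?_
  · intro x y hxy
    obtain ⟨σ, hσ⟩ := MulAction.mem_orbit_iff.mp hxy
    apply Fin.ext
    simp only
    rw [← hσ, cP1_smul]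
  · intro q
    induction q using Quotient.ind with
    | _ x =>
    simp only [Quotient.lift_mk]
    obtain ⟨σ, hσ⟩ := (orbit_rep p n hp2 g hgp hg x).2
    exact (Quotient.sound (MulAction.mem_orbit_iff.mpr ⟨σ, hσ⟩)).symm
  · intro j
    apply Fin.ext
    simp only [Quotient.lift_mk]
    exact cP1_repP p n g hgp hg j.1 j.2
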